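/- In the universal enveloping algebra U(AK(1)), the anticommutator A_iA_j + A_jA_i depends only on i + j: for all half-integers i, j, k, l with i + j = k + l, one has A_iA_j + A_jA_i = A_kA_l + A_lA_k. -/

import Mathlib

/-- In `U(AK(1))` (any associative algebra over a field of
characteristic 0 with elements `E n` (`n ∈ ℤ`) and `A p` — where `A p` stands for
`A_{p+½}`, encoding the half-integer index `i = p + ½` by the integer `p` — satisfying
`EₙEₘ = E_{n+m}`, `EₙAᵢ + AᵢEₙ = A_{n+i}` and `AᵢAⱼ − AⱼAᵢ = (j−i)E_{i+j}`),
the anticommutator `AᵢAⱼ + AⱼAᵢ` depends only on `i + j`: if `i + j = k + l` then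
`AᵢAⱼ + AⱼAᵢ = A_kA_l + A_lA_k`. -/
theorem uAK1_anticommutator_depends_only_on_sum
    {R : Type*} [Ring R] [Algebra ℚ R] (E : ℤ → R) (A : ℤ → R)
    (hEE : ∀ n m : ℤ, E n * E m = E (n + m))
    (hEA : ∀ n p : ℤ, E n * A p + A p * E n = A (n + p))
    (hAA : ∀ p q : ℤ, A p * A q - A q * A p = ((q - p : ℤ) : ℚ) • E (p + q + 1)) :
    ∀ p q r s : ℤ, p + q = r + s →
      A p * A q + A q * A p = A r * A s + A s * A r := by
  -- one-step shift lemma: S(p,q) = S(p+1, q-1)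
  have step : ∀ p q : ℤ, A p * A q + A q * A p
      = A (p+1) * A (q-1) + A (q-1) * A (p+1) := by
    intro p q
    have h1 : A (p+1) = E 1 * A p + A p * E 1 := by
      have := hEA 1 p; rw [show (1:ℤ) + p = p + 1 by ring] at this
      exact this.symm
    have h2 : A q = E 1 * A (q-1) + A (q-1) * E 1 := by
      have := hEA 1 (q-1); rw [show (1:ℤ) + (q-1) = q by ring] at this
      exact this.symm
    have hc : A p * A (q-1) - A (q-1) * A p
        = ((q - 1 - p : ℤ) : ℚ) • E (p + q) := by
      have := hAA p (q-1)
      rwa [show p + (q-1) + 1 = p + q by ring,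
        show (q - 1 - p : ℤ) = q - 1 - p by ring] at this
    have hcomm : E 1 * (A p * A (q-1) - A (q-1) * A p)
        - (A p * A (q-1) - A (q-1) * A p) * E 1 = 0 := by
      rw [hc, mul_smul_comm, smul_mul_assoc, hEE, hEE,
        show (1:ℤ) + (p + q) = p + q + 1 by ring, sub_self]
    have key : A (p+1) * A (q-1) + A (q-1) * A (p+1)
        = A p * A q + A q * A p
          + (E 1 * (A p * A (q-1) - A (q-1) * A p)
            - (A p * A (q-1) - A (q-1) * A p) * E 1) := by
      rw [h1, h2]; noncomm_ring
    rw [key, hcomm, add_zero]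
  -- iterate the shift
  have shift : ∀ (k : ℤ) (p q : ℤ), A p * A q + A q * A p
      = A (p+k) * A (q-k) + A (q-k) * A (p+k) := by
    intro k
    induction k using Int.induction_on with
    | zero => intro p q; norm_num
    | succ k ih =>
      intro p q
      rw [ih p q, step (p+k) (q-k),
        show p + k + 1 = p + (k+1 : ℤ) by ring,
        show q - k - 1 = q - (k+1 : ℤ) by ring]
    | pred k ih =>
      intro p q
      have := step (p - (k+1)) (q + (k+1))
      rw [show p - (k+1) + 1 = p + (-(k:ℤ)) by ring,
        show q + (k+1) - 1 = q - (-(k:ℤ)) by ring,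
        show p - (k+1) = p + (-(k+1) : ℤ) by ring,
        show q + (k+1) = q - (-(k+1) : ℤ) by ring] at this
      rw [show (-(k:ℤ) - 1) = -((k:ℤ)+1) by ring, ih p q, ← this]
  intro p q r s hpqrs
  have h := shift (r - p) p q
  rw [show p + (r - p) = r by ring, show q - (r - p) = s by omega] at h
  exact h
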